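/- arXiv:2510.04698 — 4 statements merged into one kernel-verified Lean document; each statement's English description precedes it below -/
import Mathlib

section
/- Let f, F : ℝ → ℝ, let p ∈ ℝ, and let n > 0 be a real number. Suppose F is differentiable at p with F'(p) = f(p), and 0 < F(p) < 1. Define θ(x) = sin²((π/2)·F(x)). Then θ is differentiable at p and n·θ'(p)² / (θ(p)·(1 − θ(p))) = n·π²·f(p)². -/
open Real

/-- Fisher information of the Heng–Woodford efficient code: with encoding
probability `θ x = sin² ((π/2) F x)` where `F` has derivative `f p` at `p` and
`0 < F p < 1`, the binomial Fisher information `n θ'(p)² / (θ(p)(1-θ(p)))`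
equals `n π² f(p)²`. -/
theorem stmt0 (f F : ℝ → ℝ) (p n : ℝ) (hn : 0 < n)
    (hF : HasDerivAt F (f p) p) (h0 : 0 < F p) (h1 : F p < 1) :
    DifferentiableAt ℝ (fun x => Real.sin (π / 2 * F x) ^ 2) p ∧
      n * (deriv (fun x => Real.sin (π / 2 * F x) ^ 2) p) ^ 2 /
          ((Real.sin (π / 2 * F p) ^ 2) * (1 - Real.sin (π / 2 * F p) ^ 2)) =
        n * π ^ 2 * (f p) ^ 2 := by
  have hG : HasDerivAt (fun x => π / 2 * F x) (π / 2 * f p) p := hF.const_mul _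
  have hS := hG.sin
  have hθ := hS.pow 2
  refine ⟨hθ.differentiableAt, ?_⟩
  rw [show deriv (fun x => Real.sin (π / 2 * F x) ^ 2) p = _ from hθ.deriv]
  set a := π / 2 * F p with ha
  have hπ := Real.pi_pos
  have ha0 : 0 < a := by positivity
  have ha1 : a < π / 2 := by
    have := mul_lt_mul_of_pos_left h1 (by positivity : (0:ℝ) < π / 2)
    simpa [ha] using this
  have hsin : 0 < Real.sin a := Real.sin_pos_of_pos_of_lt_pi ha0 (by linarith)
  have hcos : 0 < Real.cos a := Real.cos_pos_of_mem_Ioo ⟨by linarith, ha1⟩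
  have hc : 1 - Real.sin a ^ 2 = Real.cos a ^ 2 := by
    have := Real.sin_sq_add_cos_sq a; linarith
  rw [hc]
  field_simp
  ring
end

section
/- Let s(x) = 1/(1 + exp(−x)) be the logistic function. There exists a constant C > 0 such that for every c ∈ ℝ and every σ > 0: | ∫ s(c + x) dN(0, σ²)(x) − s(c) − (σ²/2)·s(c)·(1 − s(c))·(1 − 2·s(c)) | ≤ C·σ⁴. -/
open MeasureTheory ProbabilityTheory Real Filter

noncomputable def sg (t : ℝ) : ℝ := (1 + Real.exp (-t))⁻¹

lemma sg_denom_pos (t : ℝ) : 0 < 1 + Real.exp (-t) := by positivity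

lemma sg_pos (t : ℝ) : 0 < sg t := by
  rw [sg]; positivity

lemma sg_lt_one (t : ℝ) : sg t < 1 := by
  rw [sg]
  rw [inv_lt_one_iff₀]
  right
  linarith [Real.exp_pos (-t)]

lemma hasDerivAt_sg (t : ℝ) : HasDerivAt sg (sg t * (1 - sg t)) t := by
  have h1 : HasDerivAt (fun t : ℝ => 1 + Real.exp (-t)) (-Real.exp (-t)) t := by
    have := (Real.hasDerivAt_exp (-t)).comp t (hasDerivAt_neg t)
    simpa using this.const_add 1
  have h2 := h1.inv (ne_of_gt (sg_denom_pos t))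
  refine h2.congr_deriv ?_
  have hd := sg_denom_pos t
  rw [sg]
  field_simp
  ring

noncomputable def dA (t : ℝ) : ℝ := sg t * (1 - sg t)
noncomputable def dB (t : ℝ) : ℝ := dA t * (1 - 2 * sg t)
noncomputable def dC (t : ℝ) : ℝ := dA t * (1 - 6 * sg t + 6 * sg t ^ 2)
noncomputable def dD (t : ℝ) : ℝ := dA t * (1 - 14 * sg t + 36 * sg t ^ 2 - 24 * sg t ^ 3)

lemma hasDerivAt_dA (t : ℝ) : HasDerivAt dA (dB t) t := by
  have h := (hasDerivAt_sg t).mul ((hasDerivAt_const t (1:ℝ)).sub (hasDerivAt_sg t))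
  refine h.congr_deriv ?_
  simp only [dA, dB, Pi.sub_apply, Pi.add_apply]
  ring

lemma hasDerivAt_dB (t : ℝ) : HasDerivAt dB (dC t) t := by
  have h := (hasDerivAt_dA t).mul ((hasDerivAt_const t (1:ℝ)).sub ((hasDerivAt_sg t).const_mul 2))
  refine h.congr_deriv ?_
  simp only [dA, dB, dC, Pi.sub_apply, Pi.add_apply]
  ring

lemma hasDerivAt_dC (t : ℝ) : HasDerivAt dC (dD t) t := by
  have hsq : HasDerivAt (fun t => sg t ^ 2) (2 * sg t * (sg t * (1 - sg t))) t := by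
    have := (hasDerivAt_sg t).pow 2
    refine this.congr_deriv ?_; ring
  have h := (hasDerivAt_dA t).mul
    (((hasDerivAt_const t (1:ℝ)).sub ((hasDerivAt_sg t).const_mul 6)).add (hsq.const_mul 6))
  refine h.congr_deriv ?_
  simp only [dA, dB, dC, dD, Pi.sub_apply, Pi.add_apply]
  ring

lemma dD_bound (t : ℝ) : |dD t| ≤ 19 := by
  have h0 := sg_pos t
  have h1 := sg_lt_one t
  rw [dD, dA, abs_mul]
  have hA : |sg t * (1 - sg t)| ≤ 1/4 := by
    rw [abs_le]; constructor <;> nlinarith [sq_nonneg (sg t - 1/2)]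
  have hP : |1 - 14 * sg t + 36 * sg t ^ 2 - 24 * sg t ^ 3| ≤ 75 := by
    rw [abs_le]; constructor <;> nlinarith
  calc |sg t * (1 - sg t)| * |1 - 14 * sg t + 36 * sg t ^ 2 - 24 * sg t ^ 3|
      ≤ (1/4) * 75 := by
        apply mul_le_mul hA hP (abs_nonneg _) (by norm_num)
    _ ≤ 19 := by norm_num

lemma mv_bound {f f' : ℝ → ℝ} (hf : ∀ t, HasDerivAt f (f' t) t) (h0 : f 0 = 0)
    {B x : ℝ} (hB : ∀ t ∈ Set.uIcc 0 x, |f' t| ≤ B) : |f x| ≤ B * |x| := by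
  have h := Convex.norm_image_sub_le_of_norm_hasDerivWithin_le
    (f := f) (f' := f') (s := Set.uIcc 0 x) (C := B)
    (fun t ht => (hf t).hasDerivWithinAt)
    (fun t ht => by simpa [Real.norm_eq_abs] using hB t ht)
    (convex_uIcc 0 x) Set.left_mem_uIcc Set.right_mem_uIcc
  simpa [h0, Real.norm_eq_abs] using h

lemma abs_le_of_mem_uIcc {t x : ℝ} (ht : t ∈ Set.uIcc 0 x) : |t| ≤ |x| := by
  rcases Set.mem_uIcc.mp ht with ⟨h1, h2⟩ | ⟨h1, h2⟩ <;>
    (rw [abs_le]; constructor <;>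
      [linarith [neg_abs_le x, le_abs_self x]; linarith [neg_abs_le x, le_abs_self x]])

lemma dC_lip (a b : ℝ) : |dC b - dC a| ≤ 19 * |b - a| := by
  have h := Convex.norm_image_sub_le_of_norm_hasDerivWithin_le
    (f := dC) (f' := dD) (s := Set.uIcc a b) (C := 19)
    (fun t _ => (hasDerivAt_dC t).hasDerivWithinAt)
    (fun t _ => by simpa [Real.norm_eq_abs] using dD_bound t)
    (convex_uIcc a b) Set.left_mem_uIcc Set.right_mem_uIcc
  simpa [Real.norm_eq_abs] using h

noncomputable def rem (c x : ℝ) : ℝ :=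
  sg (c + x) - sg c - dA c * x - dB c * (x ^ 2 / 2) - dC c * (x ^ 3 / 6)

lemma rem_bound (c x : ℝ) : |rem c x| ≤ 19 * x ^ 4 := by
  set r1 : ℝ → ℝ := fun y => dB (c + y) - dB c - dC c * y with hr1def
  set r2 : ℝ → ℝ := fun y => dA (c + y) - dA c - dB c * y - dC c * (y ^ 2 / 2) with hr2def
  have hadd : ∀ y : ℝ, HasDerivAt (fun z : ℝ => c + z) 1 y := fun y =>
    (hasDerivAt_id y).const_add c
  have hdr1 : ∀ y, HasDerivAt r1 (dC (c + y) - dC c) y := by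
    intro y
    have h1 : HasDerivAt (fun z => dB (c + z)) (dC (c + y)) y := by
      have := (hasDerivAt_dB (c + y)).comp y (hadd y)
      simp only [mul_one] at this; exact this
    exact ((h1.sub_const (dB c)).sub ((hasDerivAt_id y).const_mul (dC c))).congr_deriv (by simp)
  have hdr2 : ∀ y, HasDerivAt r2 (r1 y) y := by
    intro y
    have h1 : HasDerivAt (fun z => dA (c + z)) (dB (c + y)) y := by
      have := (hasDerivAt_dA (c + y)).comp y (hadd y)
      simp only [mul_one] at this; exact this
    have h2 : HasDerivAt (fun z : ℝ => dC c * (z ^ 2 / 2)) (dC c * y) y := by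
      have := ((hasDerivAt_pow 2 y).div_const 2).const_mul (dC c)
      refine this.congr_deriv ?_
      ring
    have := ((h1.sub_const (dA c)).sub ((hasDerivAt_id y).const_mul (dB c))).sub h2
    refine this.congr_deriv ?_
    simp [hr1def]
    try ring
  have hdr3 : ∀ y, HasDerivAt (rem c) (r2 y) y := by
    intro y
    have h1 : HasDerivAt (fun z => sg (c + z)) (dA (c + y)) y := by
      have := (hasDerivAt_sg (c + y)).comp y (hadd y)
      simp only [mul_one] at this; exact this
    have h2 : HasDerivAt (fun z : ℝ => dB c * (z ^ 2 / 2)) (dB c * y) y := by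
      have := ((hasDerivAt_pow 2 y).div_const 2).const_mul (dB c)
      refine this.congr_deriv ?_
      ring
    have h3 : HasDerivAt (fun z : ℝ => dC c * (z ^ 3 / 6)) (dC c * (y ^ 2 / 2)) y := by
      have := ((hasDerivAt_pow 3 y).div_const 6).const_mul (dC c)
      refine this.congr_deriv ?_
      push_cast
      ring
    have := ((((h1.sub_const (sg c)).sub ((hasDerivAt_id y).const_mul (dA c))).sub h2).sub h3)
    refine this.congr_deriv ?_
    simp [hr2def]
    try ring
  have hb1 : ∀ y, |r1 y| ≤ 19 * |y| ^ 2 := by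
    intro y
    have h := mv_bound hdr1 (by simp [hr1def]) (B := 19 * |y|) (x := y) ?_
    · calc |r1 y| ≤ 19 * |y| * |y| := h
        _ = 19 * |y| ^ 2 := by ring
    · intro t ht
      have habs := abs_le_of_mem_uIcc ht
      calc |dC (c + t) - dC c| ≤ 19 * |c + t - c| := dC_lip c (c + t)
        _ = 19 * |t| := by ring_nf
        _ ≤ 19 * |y| := by linarith
  have hb2 : ∀ y, |r2 y| ≤ 19 * |y| ^ 3 := by
    intro y
    have h := mv_bound hdr2 (by simp [hr2def]) (B := 19 * |y| ^ 2) (x := y) ?_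
    · calc |r2 y| ≤ 19 * |y| ^ 2 * |y| := h
        _ = 19 * |y| ^ 3 := by ring
    · intro t ht
      have habs := abs_le_of_mem_uIcc ht
      have hp : |t| ^ 2 ≤ |y| ^ 2 := pow_le_pow_left₀ (abs_nonneg t) habs 2
      calc |r1 t| ≤ 19 * |t| ^ 2 := hb1 t
        _ ≤ 19 * |y| ^ 2 := by linarith
  have hb3 : |rem c x| ≤ 19 * |x| ^ 3 * |x| := by
    apply mv_bound hdr3 (by simp [rem])
    intro t ht
    have habs := abs_le_of_mem_uIcc ht
    have hp : |t| ^ 3 ≤ |x| ^ 3 := pow_le_pow_left₀ (abs_nonneg t) habs 3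
    calc |r2 t| ≤ 19 * |t| ^ 3 := hb2 t
      _ ≤ 19 * |x| ^ 3 := by linarith
  calc |rem c x| ≤ 19 * |x| ^ 3 * |x| := hb3
    _ = 19 * |x| ^ 4 := by ring
    _ = 19 * |x ^ 4| := by rw [abs_pow]
    _ = 19 * x ^ 4 := by rw [abs_of_nonneg (by positivity)]


lemma integral_comp_neg_real (f : ℝ → ℝ) : ∫ x, f (-x) = ∫ x, f x := by
  have e : MeasurableEmbedding (fun x : ℝ => -x) :=
    (Homeomorph.neg ℝ).measurableEmbedding
  rw [← e.integral_map (g := f), Measure.map_neg_eq_self]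

lemma integral_odd_zero (f : ℝ → ℝ) (h : ∀ x, f (-x) = -f x) : ∫ x, f x = 0 := by
  have h1 := integral_comp_neg_real f
  simp_rw [h] at h1
  rw [integral_neg] at h1
  linarith

section moments

variable {b : ℝ}

lemma integrable_pow_mul_exp (hb : 0 < b) (n : ℕ) :
    Integrable (fun x : ℝ => x ^ n * Real.exp (-b * x ^ 2)) := by
  have h := integrable_rpow_mul_exp_neg_mul_sq hb (s := (n : ℝ)) (by linarith [Nat.cast_nonneg (α := ℝ) n])
  refine h.congr (Eventually.of_forall fun x => ?_)
  simp [Real.rpow_natCast]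

lemma tendsto_pow_mul_exp_cocompact (hb : 0 < b) (n : ℕ) :
    Tendsto (fun x : ℝ => x ^ n * Real.exp (-b * x ^ 2)) (cocompact ℝ) (nhds 0) := by
  have h := tendsto_rpow_abs_mul_exp_neg_mul_sq_cocompact hb (n : ℝ)
  rw [tendsto_zero_iff_norm_tendsto_zero]
  refine h.congr fun x => ?_
  rw [Real.rpow_natCast, norm_mul, Real.norm_eq_abs, Real.norm_eq_abs, abs_pow,
    abs_of_nonneg (Real.exp_nonneg _)]

lemma moment_step (hb : 0 < b) (n : ℕ) :
    (n + 1 : ℝ) * ∫ x : ℝ, x ^ n * Real.exp (-b * x ^ 2)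
      = 2 * b * ∫ x : ℝ, x ^ (n + 2) * Real.exp (-b * x ^ 2) := by
  set f : ℝ → ℝ := fun x => x ^ (n + 1) * Real.exp (-b * x ^ 2) with hf
  have hderiv : ∀ x, HasDerivAt f
      ((n + 1 : ℝ) * x ^ n * Real.exp (-b * x ^ 2)
        - 2 * b * (x ^ (n + 2) * Real.exp (-b * x ^ 2))) x := by
    intro x
    have h1 : HasDerivAt (fun x : ℝ => x ^ (n + 1)) ((n + 1 : ℝ) * x ^ n) x := by
      simpa using hasDerivAt_pow (n + 1) x
    have h2 : HasDerivAt (fun x : ℝ => Real.exp (-b * x ^ 2))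
        (Real.exp (-b * x ^ 2) * (-b * (2 * x))) x := by
      have hin : HasDerivAt (fun x : ℝ => -b * x ^ 2) (-b * (2 * x)) x := by
        simpa using (hasDerivAt_pow 2 x).const_mul (-b)
      exact hin.exp
    have := h1.mul h2
    refine this.congr_deriv ?_
    push_cast
    ring
  have hint : Integrable (fun x : ℝ =>
      (n + 1 : ℝ) * x ^ n * Real.exp (-b * x ^ 2)
        - 2 * b * (x ^ (n + 2) * Real.exp (-b * x ^ 2))) := by
    refine Integrable.sub ?_ ?_
    · refine (((integrable_pow_mul_exp hb n).const_mul ((n:ℝ)+1)).congr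
        (Eventually.of_forall fun x => by ring))
    · exact (integrable_pow_mul_exp hb (n + 2)).const_mul (2 * b)
  have hbot : Tendsto f atBot (nhds 0) :=
    (tendsto_pow_mul_exp_cocompact hb (n + 1)).mono_left _root_.atBot_le_cocompact
  have htop : Tendsto f atTop (nhds 0) :=
    (tendsto_pow_mul_exp_cocompact hb (n + 1)).mono_left _root_.atTop_le_cocompact
  have key := integral_of_hasDerivAt_of_tendsto hderiv hint hbot htop
  rw [sub_zero] at key
  rw [integral_sub (((integrable_pow_mul_exp hb n).const_mul ((n:ℝ)+1)).congr
        (Eventually.of_forall fun x => by ring))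
      ((integrable_pow_mul_exp hb (n + 2)).const_mul (2 * b))] at key
  have e1 : ∫ x : ℝ, (n + 1 : ℝ) * x ^ n * Real.exp (-b * x ^ 2)
      = (n + 1 : ℝ) * ∫ x : ℝ, x ^ n * Real.exp (-b * x ^ 2) := by
    rw [← integral_const_mul]
    congr 1; funext x; ring
  have e2 : ∫ x : ℝ, 2 * b * (x ^ (n + 2) * Real.exp (-b * x ^ 2))
      = 2 * b * ∫ x : ℝ, x ^ (n + 2) * Real.exp (-b * x ^ 2) := integral_const_mul _ _
  rw [e1, e2] at key
  linarith

lemma moment_odd (n : ℕ) (hodd : Odd n) :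
    ∫ x : ℝ, x ^ n * Real.exp (-b * x ^ 2) = 0 := by
  apply integral_odd_zero
  intro x
  rw [hodd.neg_pow]
  ring_nf

end moments



section main

variable {σ : ℝ} (hσ : 0 < σ)

lemma continuous_sg : Continuous sg := by
  have : Continuous fun t : ℝ => (1 + Real.exp (-t))⁻¹ := by
    apply Continuous.inv₀
    · continuity
    · intro t; positivity
  have h : sg = fun t : ℝ => (1 + Real.exp (-t))⁻¹ := rfl
  rw [h]
  exact this

variable (σ) in
noncomputable def vv : NNReal := (σ ^ 2).toNNReal

lemma vv_ne (hσ : 0 < σ) : vv σ ≠ 0 := by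
  simp only [vv, ne_eq, Real.toNNReal_eq_zero, not_le]
  positivity

lemma vv_coe (hσ : 0 < σ) : ((vv σ : NNReal) : ℝ) = σ ^ 2 :=
  Real.coe_toNNReal _ (by positivity)

lemma pdf_eq (hσ : 0 < σ) (x : ℝ) :
    gaussianPDFReal 0 (vv σ) x
      = (Real.sqrt (2 * π * σ ^ 2))⁻¹ * Real.exp (-(2 * σ ^ 2)⁻¹ * x ^ 2) := by
  rw [gaussianPDFReal, vv_coe hσ, sub_zero]
  congr 1
  rw [neg_div, div_eq_inv_mul, neg_mul]

lemma integral_gauss (hσ : 0 < σ) (g : ℝ → ℝ) :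
    ∫ x, g x ∂(gaussianReal 0 (vv σ)) = ∫ x, gaussianPDFReal 0 (vv σ) x * g x := by
  rw [gaussianReal_of_var_ne_zero 0 (vv_ne hσ)]
  have hmeas : Measurable fun x => (gaussianPDFReal 0 (vv σ) x).toNNReal :=
    (measurable_gaussianPDFReal 0 (vv σ)).real_toNNReal
  have : volume.withDensity (gaussianPDF 0 (vv σ))
      = volume.withDensity (fun x => ((gaussianPDFReal 0 (vv σ) x).toNNReal : ENNReal)) := rfl
  rw [this, integral_withDensity_eq_integral_smul hmeas]
  congr 1
  funext x
  rw [NNReal.smul_def, smul_eq_mul, Real.coe_toNNReal _ (gaussianPDFReal_nonneg 0 (vv σ) x)]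

lemma integrable_gauss_iff (hσ : 0 < σ) (g : ℝ → ℝ) :
    Integrable g (gaussianReal 0 (vv σ))
      ↔ Integrable (fun x => gaussianPDFReal 0 (vv σ) x * g x) := by
  rw [gaussianReal_of_var_ne_zero 0 (vv_ne hσ)]
  have hmeas : Measurable fun x => (gaussianPDFReal 0 (vv σ) x).toNNReal :=
    (measurable_gaussianPDFReal 0 (vv σ)).real_toNNReal
  have : volume.withDensity (gaussianPDF 0 (vv σ))
      = volume.withDensity (fun x => ((gaussianPDFReal 0 (vv σ) x).toNNReal : ENNReal)) := rfl
  rw [this, integrable_withDensity_iff_integrable_smul hmeas]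
  constructor <;> intro h <;> refine h.congr (Eventually.of_forall fun x => ?_) <;>
    simp only [NNReal.smul_def, smul_eq_mul,
      Real.coe_toNNReal _ (gaussianPDFReal_nonneg 0 (vv σ) x)]

lemma hb (hσ : 0 < σ) : (0:ℝ) < (2 * σ ^ 2)⁻¹ := by positivity

lemma integrable_pow_gauss (hσ : 0 < σ) (n : ℕ) :
    Integrable (fun x : ℝ => x ^ n) (gaussianReal 0 (vv σ)) := by
  rw [integrable_gauss_iff hσ]
  have h := (integrable_pow_mul_exp (hb hσ) n).const_mul (Real.sqrt (2 * π * σ ^ 2))⁻¹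
  refine h.congr (Eventually.of_forall fun x => ?_)
  simp only [pdf_eq hσ]
  ring

lemma moment_gauss (hσ : 0 < σ) (n : ℕ) :
    ∫ x : ℝ, x ^ n ∂(gaussianReal 0 (vv σ))
      = (Real.sqrt (2 * π * σ ^ 2))⁻¹ * ∫ x : ℝ, x ^ n * Real.exp (-(2 * σ ^ 2)⁻¹ * x ^ 2) := by
  rw [integral_gauss hσ, ← integral_const_mul]
  congr 1
  funext x
  rw [pdf_eq hσ]
  ring

lemma moment_zero_gauss (hσ : 0 < σ) :
    (Real.sqrt (2 * π * σ ^ 2))⁻¹ * ∫ x : ℝ, Real.exp (-(2 * σ ^ 2)⁻¹ * x ^ 2) = 1 := by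
  have h := integral_gaussianPDFReal_eq_one 0 (vv_ne hσ)
  rw [← h, ← integral_const_mul]
  congr 1
  funext x
  rw [pdf_eq hσ]

lemma moment_one_gauss (hσ : 0 < σ) :
    ∫ x : ℝ, x ∂(gaussianReal 0 (vv σ)) = 0 := by
  have h := moment_gauss hσ 1
  have ho := moment_odd (b := (2 * σ ^ 2)⁻¹) 1 ⟨0, by norm_num⟩
  simp only [pow_one] at h ho
  rw [h, ho, mul_zero]

lemma moment_three_gauss (hσ : 0 < σ) :
    ∫ x : ℝ, x ^ 3 ∂(gaussianReal 0 (vv σ)) = 0 := by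
  rw [moment_gauss hσ 3, moment_odd 3 ⟨1, by norm_num⟩, mul_zero]

lemma moment_two_gauss (hσ : 0 < σ) :
    ∫ x : ℝ, x ^ 2 ∂(gaussianReal 0 (vv σ)) = σ ^ 2 := by
  have hstep := moment_step (hb hσ) 0
  have h2b : 2 * (2 * σ ^ 2)⁻¹ = (σ ^ 2)⁻¹ := by
    rw [mul_inv]
    field_simp
  simp only [pow_zero, one_mul, Nat.cast_zero, zero_add] at hstep
  rw [moment_gauss hσ 2]
  have h0 := moment_zero_gauss hσ
  rw [h2b] at hstep
  -- hstep : ∫ exp = (σ^2)⁻¹ * ∫ x^2 exp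
  have hσ2 : (0:ℝ) < σ ^ 2 := by positivity
  have : ∫ x : ℝ, x ^ 2 * Real.exp (-(2 * σ ^ 2)⁻¹ * x ^ 2)
      = σ ^ 2 * ∫ x : ℝ, Real.exp (-(2 * σ ^ 2)⁻¹ * x ^ 2) := by
    rw [hstep]
    field_simp
  rw [this]
  calc (Real.sqrt (2 * π * σ ^ 2))⁻¹ * (σ ^ 2 * ∫ x : ℝ, Real.exp (-(2 * σ ^ 2)⁻¹ * x ^ 2))
      = σ ^ 2 * ((Real.sqrt (2 * π * σ ^ 2))⁻¹ * ∫ x : ℝ, Real.exp (-(2 * σ ^ 2)⁻¹ * x ^ 2)) := by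
        ring
    _ = σ ^ 2 := by rw [moment_zero_gauss hσ, mul_one]

lemma moment_four_gauss (hσ : 0 < σ) :
    ∫ x : ℝ, x ^ 4 ∂(gaussianReal 0 (vv σ)) = 3 * σ ^ 4 := by
  have hstep := moment_step (hb hσ) 2
  have h2b : 2 * (2 * σ ^ 2)⁻¹ = (σ ^ 2)⁻¹ := by
    rw [mul_inv]; field_simp
  simp only [Nat.cast_ofNat, Nat.reduceAdd] at hstep
  rw [show (2:ℝ) + 1 = 3 by norm_num] at hstep
  rw [h2b] at hstep
  -- hstep : 3 * ∫ x^2 exp = (σ^2)⁻¹ * ∫ x^4 exp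
  have hσ2 : (0:ℝ) < σ ^ 2 := by positivity
  have h4 : ∫ x : ℝ, x ^ 4 * Real.exp (-(2 * σ ^ 2)⁻¹ * x ^ 2)
      = σ ^ 2 * (3 * ∫ x : ℝ, x ^ 2 * Real.exp (-(2 * σ ^ 2)⁻¹ * x ^ 2)) := by
    rw [hstep]
    field_simp
  rw [moment_gauss hσ 4, h4]
  have h2 := moment_two_gauss hσ
  rw [moment_gauss hσ 2] at h2
  calc (Real.sqrt (2 * π * σ ^ 2))⁻¹
        * (σ ^ 2 * (3 * ∫ x : ℝ, x ^ 2 * Real.exp (-(2 * σ ^ 2)⁻¹ * x ^ 2)))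
      = 3 * σ ^ 2 * ((Real.sqrt (2 * π * σ ^ 2))⁻¹
        * ∫ x : ℝ, x ^ 2 * Real.exp (-(2 * σ ^ 2)⁻¹ * x ^ 2)) := by ring
    _ = 3 * σ ^ 2 * σ ^ 2 := by rw [h2]
    _ = 3 * σ ^ 4 := by ring

end main

/-- Second-order σ-expansion of the Gaussian smoothing of the logistic
function `s(x) = 1/(1 + exp (-x))`: there is a constant `C > 0` such that for
all `c` and `σ > 0`,
`|∫ s(c+x) dN(0,σ²)(x) - s(c) - (σ²/2) s(c)(1-s(c))(1-2s(c))| ≤ C σ⁴`. -/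
theorem stmt9 :
    ∃ C : ℝ, 0 < C ∧
      ∀ c : ℝ, ∀ σ : ℝ, 0 < σ →
        |(∫ x, 1 / (1 + Real.exp (-(c + x)))
              ∂(gaussianReal 0 ((σ ^ 2).toNNReal))) -
            1 / (1 + Real.exp (-c)) -
            σ ^ 2 / 2 * ((1 / (1 + Real.exp (-c))) *
              (1 - 1 / (1 + Real.exp (-c))) *
              (1 - 2 * (1 / (1 + Real.exp (-c)))))| ≤ C * σ ^ 4 := by
  refine ⟨57, by norm_num, fun c σ hσ => ?_⟩
  set γ := gaussianReal 0 (vv σ) with hγ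
  have hsg : ∀ t : ℝ, 1 / (1 + Real.exp (-t)) = sg t := fun t => by
    simp only [sg, one_div]
  have hrw : ((σ ^ 2).toNNReal) = vv σ := rfl
  rw [hrw]
  simp only [hsg]
  -- integrability facts
  have hsgInt : Integrable (fun x => sg (c + x)) γ := by
    refine Integrable.mono' (integrable_const 1)
      ((continuous_sg.comp (continuous_const.add continuous_id)).aestronglyMeasurable) ?_
    refine Eventually.of_forall fun x => ?_
    rw [Real.norm_eq_abs, abs_of_pos (sg_pos _)]
    exact le_of_lt (sg_lt_one _)
  have hI1 := integrable_pow_gauss hσ 1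
  have hI2 := integrable_pow_gauss hσ 2
  have hI3 := integrable_pow_gauss hσ 3
  have hI4 := integrable_pow_gauss hσ 4
  simp only [pow_one] at hI1
  have hIa : Integrable (fun x => dA c * x) γ := hI1.const_mul _
  have hIb : Integrable (fun x => dB c * (x ^ 2 / 2)) γ := by
    have := (hI2.const_mul (dB c / 2))
    refine this.congr (Eventually.of_forall fun x => by ring)
  have hIc : Integrable (fun x => dC c * (x ^ 3 / 6)) γ := by
    have := (hI3.const_mul (dC c / 6))
    refine this.congr (Eventually.of_forall fun x => by ring)
  have hIrem : Integrable (fun x => rem c x) γ := by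
    have : (fun x => rem c x)
        = fun x => sg (c + x) - sg c - dA c * x - dB c * (x ^ 2 / 2) - dC c * (x ^ 3 / 6) := by
      funext x; simp only [rem]
    rw [this]
    exact (((hsgInt.sub (integrable_const _)).sub hIa).sub hIb).sub hIc
  -- expansion of the integral
  have hexp : ∫ x, sg (c + x) ∂γ
      = sg c + dA c * (∫ x, x ∂γ) + dB c / 2 * (∫ x, x ^ 2 ∂γ)
        + dC c / 6 * (∫ x, x ^ 3 ∂γ) + ∫ x, rem c x ∂γ := by
    have hfun : (fun x => sg (c + x))
        = fun x => sg c + dA c * x + dB c * (x ^ 2 / 2) + dC c * (x ^ 3 / 6) + rem c x := by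
      funext x; simp only [rem]; ring
    rw [hfun]
    have A1 : Integrable (fun x : ℝ => sg c + dA c * x) γ := (integrable_const _).add hIa
    have A2 : Integrable (fun x : ℝ => sg c + dA c * x + dB c * (x ^ 2 / 2)) γ := A1.add hIb
    have A3 : Integrable
        (fun x : ℝ => sg c + dA c * x + dB c * (x ^ 2 / 2) + dC c * (x ^ 3 / 6)) γ := A2.add hIc
    rw [integral_add A3 hIrem, integral_add A2 hIc, integral_add A1 hIb,
      integral_add (integrable_const _) hIa]
    have h1 : ∫ x, dA c * x ∂γ = dA c * ∫ x, x ∂γ := integral_const_mul _ _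
    have h2 : ∫ x, dB c * (x ^ 2 / 2) ∂γ = dB c / 2 * ∫ x, x ^ 2 ∂γ := by
      rw [← integral_const_mul]
      congr 1; funext x; ring
    have h3 : ∫ x, dC c * (x ^ 3 / 6) ∂γ = dC c / 6 * ∫ x, x ^ 3 ∂γ := by
      rw [← integral_const_mul]
      congr 1; funext x; ring
    have h0 : ∫ _x, sg c ∂γ = sg c := by
      rw [integral_const]
      simp [hγ]
    rw [h1, h2, h3, h0]
  rw [hexp, moment_one_gauss hσ, moment_two_gauss hσ, moment_three_gauss hσ]
  have hdBc : sg c * (1 - sg c) * (1 - 2 * sg c) = dB c := by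
    simp only [dB, dA]
  rw [hdBc]
  have hsimp : sg c + dA c * 0 + dB c / 2 * σ ^ 2 + dC c / 6 * 0 + (∫ x, rem c x ∂γ)
      - sg c - σ ^ 2 / 2 * dB c = ∫ x, rem c x ∂γ := by ring
  rw [hsimp]
  -- final bound
  calc |∫ x, rem c x ∂γ| ≤ ∫ x, |rem c x| ∂γ := by
        simpa [Real.norm_eq_abs] using norm_integral_le_integral_norm (fun x => rem c x) (μ := γ)
    _ ≤ ∫ x, 19 * x ^ 4 ∂γ := by
        refine integral_mono hIrem.abs (hI4.const_mul 19) fun x => ?_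
        exact rem_bound c x
    _ = 19 * (3 * σ ^ 4) := by rw [integral_const_mul, moment_four_gauss hσ]
    _ = 57 * σ ^ 4 := by ring
end

section
/- Let Λ₀ ∈ ℝ and σ_B > 0, let λ(p) = log(p/(1−p)) and s(x) = 1/(1+exp(−x)), and set V_p = p·(1−p). Then there exists a differentiable function h : (0,1) → ℝ with h'(p) = Λ₀ − λ(p) for all p, and for any such h the function P(p) = exp(h(p)) attains a strict global maximum at the unique point p₀ = s(Λ₀) (so P is unimodal); moreover, under the identifications κ = σ_B² and σ² = 4·σ_B², for every p ∈ (0,1) the leading-order BLO bias terms equal the leading-order Bayesian bias terms: κ·p·(1−p)·V_p·(Λ₀ − λ(p)) + (σ²/2)·p·(1−p)·(1−2p) = σ_B²·p²·(1−p)²·(log P)'(p) + 2·σ_B²·p·(1−p)·(1−2p). -/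
/-- The log-odds function `λ(p) = log (p/(1-p))`. -/
noncomputable def logOdds (p : ℝ) : ℝ := Real.log (p / (1 - p))

/-- The logistic function `s(x) = 1/(1 + exp (-x))`. -/
noncomputable def logistic (x : ℝ) : ℝ := 1 / (1 + Real.exp (-x))

lemma logistic_mem_Ioo (x : ℝ) : logistic x ∈ Set.Ioo (0 : ℝ) 1 := by
  have h1 : 0 < 1 + Real.exp (-x) := by positivity
  constructor
  · exact div_pos one_pos h1
  · unfold logistic
    rw [div_lt_one h1]
    have := Real.exp_pos (-x)
    linarith

lemma logOdds_logistic (x : ℝ) : logOdds (logistic x) = x := by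
  have h1 : 0 < 1 + Real.exp (-x) := by positivity
  have hp : logistic x / (1 - logistic x) = Real.exp x := by
    unfold logistic
    have h2 : 1 - 1 / (1 + Real.exp (-x)) = Real.exp (-x) / (1 + Real.exp (-x)) := by
      field_simp
      ring
    rw [h2]
    rw [div_div_div_eq]
    have he : Real.exp (-x) ≠ 0 := (Real.exp_pos _).ne'
    rw [one_mul]
    field_simp
    have key : Real.exp x * Real.exp (-x) = 1 := by
      rw [← Real.exp_add]; simp
    nlinarith [key]
  rw [logOdds, hp, Real.log_exp]

lemma logOdds_strictMono : StrictMonoOn logOdds (Set.Ioo (0:ℝ) 1) := by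
  intro a ha b hb hab
  unfold logOdds
  have h1 : 0 < a / (1 - a) := div_pos ha.1 (by linarith [ha.2])
  apply Real.log_lt_log h1
  have h1b : (0:ℝ) < 1 - b := by linarith [hb.2]
  rw [div_lt_div_iff₀ (by linarith [ha.2]) h1b]
  nlinarith [ha.1, hb.1]

/-- Leading-order coincidence of the untruncated BLO model with a Bayesian
model with unbounded log-odds encoding and a specific unimodal prior: there is
a differentiable `h` with `h'(p) = Λ₀ - λ(p)` on `(0,1)`; for any such `h`,
the prior shape `P(p) = exp (h p)` attains a strict global maximum at the
unique point `p₀ = s(Λ₀)`; and under the identifications `κ = σ_B²`,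
`σ² = 4 σ_B²`, the leading-order BLO bias terms equal the leading-order
Bayesian bias terms at every `p ∈ (0,1)`. -/
theorem stmt14 (Λ₀ σB : ℝ) (hσB : 0 < σB) :
    (∃ h : ℝ → ℝ, ∀ p ∈ Set.Ioo (0 : ℝ) 1, HasDerivAt h (Λ₀ - logOdds p) p) ∧
      ∀ h : ℝ → ℝ,
        (∀ p ∈ Set.Ioo (0 : ℝ) 1, HasDerivAt h (Λ₀ - logOdds p) p) →
          (logistic Λ₀ ∈ Set.Ioo (0 : ℝ) 1 ∧
            (∀ p ∈ Set.Ioo (0 : ℝ) 1, p ≠ logistic Λ₀ →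
              Real.exp (h p) < Real.exp (h (logistic Λ₀))) ∧
            ∀ p ∈ Set.Ioo (0 : ℝ) 1,
              σB ^ 2 * (p * (1 - p)) * (p * (1 - p)) * (Λ₀ - logOdds p) +
                  (4 * σB ^ 2) / 2 * (p * (1 - p)) * (1 - 2 * p) =
                σB ^ 2 * p ^ 2 * (1 - p) ^ 2 *
                    deriv (fun q => Real.log (Real.exp (h q))) p +
                  2 * σB ^ 2 * p * (1 - p) * (1 - 2 * p)) := by
  constructor
  · -- existence of h
    refine ⟨fun p => Λ₀ * p - (p * Real.log p + (1 - p) * Real.log (1 - p)), ?_⟩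
    intro p hp
    obtain ⟨hp0, hp1⟩ := hp
    have h1p : (0:ℝ) < 1 - p := by linarith
    have d1 : HasDerivAt (fun q : ℝ => q * Real.log q) (Real.log p + 1) p := by
      have := (hasDerivAt_id p).mul (Real.hasDerivAt_log hp0.ne')
      refine this.congr_deriv ?_
      simp [hp0.ne']
    have d2 : HasDerivAt (fun q : ℝ => (1 - q) * Real.log (1 - q))
        (-(Real.log (1 - p) + 1)) p := by
      have dinner : HasDerivAt (fun q : ℝ => 1 - q) (-1) p := by
        simpa using (hasDerivAt_id' p).const_sub (1:ℝ)
      have := dinner.mul (((Real.hasDerivAt_log h1p.ne').comp p dinner))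
      refine this.congr_deriv ?_
      rw [Function.comp_apply, ← mul_assoc, mul_inv_cancel₀ h1p.ne']
      ring
    have d3 : HasDerivAt (fun q : ℝ => Λ₀ * q) Λ₀ p := by
      simpa using (hasDerivAt_id p).const_mul Λ₀
    have := d3.sub (d1.add d2)
    refine this.congr_deriv ?_
    rw [logOdds, Real.log_div hp0.ne' h1p.ne']
    ring
  · intro h hh
    have hp₀ := logistic_mem_Ioo Λ₀
    set p₀ := logistic Λ₀ with hp₀def
    have hΛ : logOdds p₀ = Λ₀ := logOdds_logistic Λ₀
    refine ⟨hp₀, ?_, ?_⟩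
    · -- strict maximum
      intro p hp hne
      have hderiv : ∀ x ∈ Set.Ioo (0:ℝ) 1, deriv h x = Λ₀ - logOdds x :=
        fun x hx => (hh x hx).deriv
      rw [Real.exp_lt_exp]
      rcases lt_or_gt_of_ne hne with hlt | hgt
      · -- p < p₀ : h strict mono on Ioc 0 p₀
        have hmono : StrictMonoOn h (Set.Ioc (0:ℝ) p₀) := by
          apply strictMonoOn_of_deriv_pos (convex_Ioc 0 p₀)
          · intro x hx
            have hx' : x ∈ Set.Ioo (0:ℝ) 1 := ⟨hx.1, lt_of_le_of_lt hx.2 hp₀.2⟩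
            exact ((hh x hx').continuousAt).continuousWithinAt
          · intro x hx
            rw [interior_Ioc] at hx
            have hx' : x ∈ Set.Ioo (0:ℝ) 1 := ⟨hx.1, lt_trans hx.2 hp₀.2⟩
            rw [hderiv x hx']
            have := logOdds_strictMono hx' hp₀ hx.2
            rw [hΛ] at this
            linarith
        exact hmono ⟨hp.1, le_of_lt hlt⟩ ⟨hp₀.1, le_refl _⟩ hlt
      · -- p₀ < p : h strict anti on Ico p₀ 1
        have hanti : StrictAntiOn h (Set.Ico p₀ (1:ℝ)) := by
          apply strictAntiOn_of_deriv_neg (convex_Ico p₀ 1)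
          · intro x hx
            have hx' : x ∈ Set.Ioo (0:ℝ) 1 := ⟨lt_of_lt_of_le hp₀.1 hx.1, hx.2⟩
            exact ((hh x hx').continuousAt).continuousWithinAt
          · intro x hx
            rw [interior_Ico] at hx
            have hx' : x ∈ Set.Ioo (0:ℝ) 1 := ⟨lt_trans hp₀.1 hx.1, hx.2⟩
            rw [hderiv x hx']
            have := logOdds_strictMono hp₀ hx' hx.1
            rw [hΛ] at this
            linarith
        exact hanti ⟨le_refl _, hp₀.2⟩ ⟨le_of_lt hgt, hp.2⟩ hgt
    · -- bias equality
      intro p hp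
      have heq : (fun q => Real.log (Real.exp (h q))) = h := by
        funext q; exact Real.log_exp _
      rw [heq, (hh p hp).deriv]
      ring
end

section
/- Let μ ∈ ℝ and σ > 0, let s(x) = 1/(1 + exp(−x)) be the logistic function and λ(p) = log(p/(1−p)) its inverse on (0,1). Then the pushforward of the Gaussian measure N(μ, σ²) under s equals the measure on ℝ having density f(p) = (indicator of 0 < p < 1) · (1/(p·(1−p))) · (1/√(2πσ²)) · exp(−(λ(p) − μ)²/(2σ²)) with respect to Lebesgue measure. -/
open MeasureTheory ProbabilityTheory

section aux

noncomputable def logisticFn (x : ℝ) : ℝ := 1 / (1 + Real.exp (-x))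

lemma logistic_pos (x : ℝ) : 0 < logisticFn x := by
  unfold logisticFn; positivity

lemma one_add_exp_pos (x : ℝ) : 0 < 1 + Real.exp (-x) := by positivity

lemma logistic_lt_one (x : ℝ) : logisticFn x < 1 := by
  unfold logisticFn
  rw [div_lt_one (one_add_exp_pos x)]
  linarith [Real.exp_pos (-x)]

lemma one_sub_logistic (x : ℝ) : 1 - logisticFn x = Real.exp (-x) / (1 + Real.exp (-x)) := by
  unfold logisticFn
  field_simp
  ring

lemma logistic_injective : Function.Injective logisticFn := by
  intro x y hxy
  unfold logisticFn at hxy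
  have hx := one_add_exp_pos x
  have hy := one_add_exp_pos y
  field_simp at hxy
  have := Real.exp_injective (by linarith : Real.exp (-x) = Real.exp (-y))
  linarith

lemma logistic_range : Set.range logisticFn = Set.Ioo (0 : ℝ) 1 := by
  ext p
  constructor
  · rintro ⟨x, rfl⟩
    exact ⟨logistic_pos x, logistic_lt_one x⟩
  · rintro ⟨hp0, hp1⟩
    refine ⟨Real.log (p / (1 - p)), ?_⟩
    unfold logisticFn
    have h1p : 0 < 1 - p := by linarith
    have h : Real.exp (-(Real.log (p / (1 - p)))) = (1 - p) / p := by
      rw [← Real.log_inv, Real.exp_log (by positivity), inv_div]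
    rw [h]
    field_simp
    ring

lemma logit_logistic (x : ℝ) : Real.log (logisticFn x / (1 - logisticFn x)) = x := by
  have h := one_add_exp_pos x
  have heq : logisticFn x / (1 - logisticFn x) = Real.exp x := by
    rw [one_sub_logistic]
    unfold logisticFn
    rw [Real.exp_neg]
    have h1 := (Real.exp_pos x).ne'
    have h2 : (1 : ℝ) + (Real.exp x)⁻¹ ≠ 0 := by positivity
    field_simp
  rw [heq, Real.log_exp]

lemma logistic_hasDerivAt (x : ℝ) :
    HasDerivAt logisticFn (logisticFn x * (1 - logisticFn x)) x := by
  have h := one_add_exp_pos x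
  have hd : HasDerivAt (fun x : ℝ => 1 + Real.exp (-x)) (-Real.exp (-x)) x := by
    simpa using (HasDerivAt.exp (hasDerivAt_neg x)).const_add 1
  have hinv := hd.inv (ne_of_gt h)
  have heq : -(-Real.exp (-x)) / (1 + Real.exp (-x)) ^ 2
      = logisticFn x * (1 - logisticFn x) := by
    rw [one_sub_logistic]
    unfold logisticFn
    field_simp
  rw [heq] at hinv
  have hfun : (fun y : ℝ => 1 + Real.exp (-y))⁻¹ = logisticFn := by
    funext y; simp [logisticFn, one_div]
  rw [hfun] at hinv
  exact hinv

lemma logistic_measurable : Measurable logisticFn := by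
  have : Continuous logisticFn := by
    unfold logisticFn
    exact continuous_const.div (by continuity) (fun x => (one_add_exp_pos x).ne')
  exact this.measurable

end aux

/-- Change of variables for the BLO response distribution: the pushforward of
the Gaussian measure `N(μ, σ²)` under the logistic function
`s(x) = 1/(1 + exp (-x))` has density
`p ↦ 1_{(0,1)}(p) · (1/(p(1-p))) · (1/√(2πσ²)) · exp (-(λ(p) - μ)²/(2σ²))`
with respect to Lebesgue measure, where `λ(p) = log (p/(1-p))`. -/
theorem stmt16 (μ σ : ℝ) (hσ : 0 < σ) :
    Measure.map (fun x : ℝ => 1 / (1 + Real.exp (-x)))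
        (gaussianReal μ ((σ ^ 2).toNNReal)) =
      volume.withDensity (fun p : ℝ =>
        ENNReal.ofReal
          (Set.indicator (Set.Ioo (0 : ℝ) 1)
            (fun p => 1 / (p * (1 - p)) * (1 / Real.sqrt (2 * Real.pi * σ ^ 2)) *
              Real.exp (-(Real.log (p / (1 - p)) - μ) ^ 2 / (2 * σ ^ 2))) p)) := by
  have hv : ((σ ^ 2).toNNReal : ℝ) = σ ^ 2 := Real.coe_toNNReal _ (by positivity)
  have hvne : (σ ^ 2).toNNReal ≠ 0 := by
    simp only [ne_eq, Real.toNNReal_eq_zero, not_le]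
    positivity
  have hLfun : (fun x : ℝ => 1 / (1 + Real.exp (-x))) = logisticFn := rfl
  set g : ℝ → ℝ := fun p => 1 / (p * (1 - p)) * (1 / Real.sqrt (2 * Real.pi * σ ^ 2)) *
      Real.exp (-(Real.log (p / (1 - p)) - μ) ^ 2 / (2 * σ ^ 2)) with hg
  refine Measure.ext fun A hA => ?_
  rw [hLfun, Measure.map_apply logistic_measurable hA,
    gaussianReal_apply _ hvne, withDensity_apply _ hA]
  -- RHS: indicator
  have hIoo : MeasurableSet (Set.Ioo (0 : ℝ) 1) := measurableSet_Ioo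
  have hrhs : ∫⁻ p in A, ENNReal.ofReal (Set.indicator (Set.Ioo (0 : ℝ) 1) g p)
      = ∫⁻ p in A ∩ Set.Ioo (0 : ℝ) 1, ENNReal.ofReal (g p) := by
    rw [← lintegral_indicator hA, ← lintegral_indicator (hA.inter hIoo)]
    congr 1
    ext p
    by_cases hp : p ∈ Set.Ioo (0 : ℝ) 1 <;> by_cases hpA : p ∈ A <;>
      simp [Set.indicator, hp, hpA]
  rw [hrhs]
  have himg : A ∩ Set.Ioo (0 : ℝ) 1 = logisticFn '' (logisticFn ⁻¹' A) := by
    rw [Set.image_preimage_eq_inter_range, logistic_range]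
  rw [himg]
  have hs : MeasurableSet (logisticFn ⁻¹' A) := logistic_measurable hA
  have hderiv : ∀ x ∈ logisticFn ⁻¹' A,
      HasDerivWithinAt logisticFn (logisticFn x * (1 - logisticFn x)) (logisticFn ⁻¹' A) x :=
    fun x _ => (logistic_hasDerivAt x).hasDerivWithinAt
  have hderiv' : ∀ x ∈ logisticFn ⁻¹' A,
      HasFDerivWithinAt logisticFn
        (ContinuousLinearMap.smulRight (1 : ℝ →L[ℝ] ℝ) (logisticFn x * (1 - logisticFn x)))
        (logisticFn ⁻¹' A) x :=
    fun x hx => (hderiv x hx).hasFDerivWithinAt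
  rw [lintegral_image_eq_lintegral_abs_det_fderiv_mul volume hs hderiv'
    (logistic_injective.injOn) (fun p => ENNReal.ofReal (g p))]
  refine setLIntegral_congr_fun hs (fun x _ => ?_)
  rw [ContinuousLinearMap.smulRight_one_eq_toSpanSingleton, ContinuousLinearMap.det_toSpanSingleton]
  have hpos := logistic_pos x
  have hlt := logistic_lt_one x
  have habs : |logisticFn x * (1 - logisticFn x)| = logisticFn x * (1 - logisticFn x) :=
    abs_of_pos (by nlinarith)
  rw [habs, ← ENNReal.ofReal_mul (by nlinarith)]
  simp only [hg, logit_logistic]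
  rw [gaussianPDF, gaussianPDFReal]
  congr 1
  rw [hv]
  have hne : logisticFn x * (1 - logisticFn x) ≠ 0 := by nlinarith
  have hne1 : 1 - logisticFn x ≠ 0 := by linarith
  have hne0 : logisticFn x ≠ 0 := by linarith
  field_simp
end
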